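/- arXiv:2301.09529 — 9 statements merged into one kernel-verified Lean document; each statement's English description precedes it below -/
import Mathlib

section
/- Let (P, ≤, ', 0, 1) be an orthogonal mlb-complete poset with x → y := { y ∨ m | m ∈ Max L(x', y') }. If x ≤ y then for every u ∈ y → z there exists v ∈ x → z with u ≤ v (i.e., y → z ≤₁ x → z). -/
/-- The set of maximal elements of the lower cone `L(a,b)`. -/
def MaxL {P : Type*} [PartialOrder P] (a b : P) : Set P :=
  {m | m ≤ a ∧ m ≤ b ∧ ∀ z, z ≤ a → z ≤ b → m ≤ z → z = m}

/-- The implication operator `x → y := { y ∨ m | m ∈ Max L(x', y') }`,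
where `y ∨ m` is expressed via `IsLUB`. -/
def parrow {P : Type*} [PartialOrder P] (c : P → P) (x y : P) : Set P :=
  {w | ∃ m ∈ MaxL (c x) (c y), IsLUB {y, m} w}

theorem stmt_2 {P : Type*} [PartialOrder P] [BoundedOrder P] (c : P → P)
    (hA : ∀ x y : P, x ≤ y → c y ≤ c x) (hI : ∀ x : P, c (c x) = x)
    (hOrth : ∀ x y : P, x ≤ c y → ∃ s, IsLUB {x, y} s)
    (hMlb : ∀ (M : Finset P) (x : P), (∀ m ∈ M, x ≤ m) →
      ∃ z, x ≤ z ∧ (∀ m ∈ M, z ≤ m) ∧ ∀ w, (∀ m ∈ M, w ≤ m) → z ≤ w → w = z)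
    (x y z : P) (hxy : x ≤ y) :
    ∀ u ∈ parrow c y z, ∃ v ∈ parrow c x z, u ≤ v := by
  classical
  rintro u ⟨m, ⟨hmy, hmz, _⟩, hu⟩
  have hmx : m ≤ c x := le_trans hmy (hA x y hxy)
  obtain ⟨m', hmm', hlb, hmax⟩ := hMlb {c x, c z} m (by
    intro t ht
    rcases Finset.mem_insert.mp ht with h | h
    · exact h ▸ hmx
    · exact (Finset.mem_singleton.mp h) ▸ hmz)
  have hm'x : m' ≤ c x := hlb _ (Finset.mem_insert_self _ _)
  have hm'z : m' ≤ c z := hlb _ (by simp)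
  obtain ⟨v, hv⟩ := hOrth m' z hm'z
  have hv' : IsLUB {z, m'} v := by rwa [Set.pair_comm]
  refine ⟨v, ⟨m', ⟨hm'x, hm'z, fun w hwx hwz hmw => hmax w (by
    intro t ht
    rcases Finset.mem_insert.mp ht with h | h
    · exact h ▸ hwx
    · exact (Finset.mem_singleton.mp h) ▸ hwz) hmw⟩, hv'⟩, ?_⟩
  apply hu.2
  intro t ht
  rcases ht with h | h
  · exact h ▸ hv'.1 (Set.mem_insert _ _)
  · exact le_trans (h ▸ hmm') (hv'.1 (Set.mem_insert_of_mem _ rfl))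
end

section
/- Let (P, ≤, ', 0, 1) be an orthogonal mlb-complete poset with x → y := { y ∨ m | m ∈ Max L(x', y') }. If x ≤ y then x → y = { y ∨ y' }; if x ≤ y' then x → y = { y ∨ (x' ∧ y') } whenever x' ∧ y' exists as a meet; and if y ≤ x then x → y = { x' ∨ y }. -/
lemma parrow_eq_of_maxL_singleton {P : Type*} [PartialOrder P] (c : P → P)
    (x y m0 j : P) (h : MaxL (c x) (c y) = {m0}) (hj : IsLUB {y, m0} j) :
    parrow c x y = {j} := by
  ext w
  simp only [parrow, Set.mem_setOf_eq, Set.mem_singleton_iff, h]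
  constructor
  · rintro ⟨m, hm, hw⟩
    subst hm
    exact hw.unique hj
  · rintro rfl
    exact ⟨m0, rfl, hj⟩

lemma maxL_of_le {P : Type*} [PartialOrder P] {a b : P} (h : b ≤ a) :
    MaxL a b = {b} := by
  ext m
  constructor
  · rintro ⟨h1, h2, h3⟩
    exact (h3 b h le_rfl h2).symm
  · rintro rfl
    exact ⟨h, le_rfl, fun z _ hz2 hz3 => le_antisymm hz2 hz3⟩

theorem stmt_3 {P : Type*} [PartialOrder P] [BoundedOrder P] (c : P → P)
    (hA : ∀ x y : P, x ≤ y → c y ≤ c x) (hI : ∀ x : P, c (c x) = x)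
    (hOrth : ∀ x y : P, x ≤ c y → ∃ s, IsLUB {x, y} s)
    (hMlb : ∀ (M : Finset P) (x : P), (∀ m ∈ M, x ≤ m) →
      ∃ z, x ≤ z ∧ (∀ m ∈ M, z ≤ m) ∧ ∀ w, (∀ m ∈ M, w ≤ m) → z ≤ w → w = z) :
    (∀ x y j : P, x ≤ y → IsLUB {y, c y} j → parrow c x y = {j}) ∧
    (∀ x y m j : P, x ≤ c y → IsGLB {c x, c y} m → IsLUB {y, m} j →
      parrow c x y = {j}) ∧
    (∀ x y j : P, y ≤ x → IsLUB {c x, y} j → parrow c x y = {j}) := by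
  refine ⟨fun x y j hxy hj => ?_, fun x y m j _ hm hj => ?_, fun x y j hyx hj => ?_⟩
  · exact parrow_eq_of_maxL_singleton c x y (c y) j (maxL_of_le (hA x y hxy)) hj
  · refine parrow_eq_of_maxL_singleton c x y m j ?_ hj
    have h1 : m ≤ c x := hm.1 (Set.mem_insert _ _)
    have h2 : m ≤ c y := hm.1 (Set.mem_insert_of_mem _ rfl)
    ext m'
    constructor
    · rintro ⟨k1, k2, k3⟩
      have : m' ≤ m := hm.2 (by
        rintro w (rfl | rfl)
        · exact k1
        · exact k2)
      exact ((k3 m h1 h2 this)).symm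
    · rintro rfl
      refine ⟨h1, h2, fun z hz1 hz2 hmz => ?_⟩
      refine le_antisymm ?_ hmz
      exact hm.2 (by rintro w (rfl | rfl); exacts [hz1, hz2])
  · rw [Set.pair_comm] at hj
    exact parrow_eq_of_maxL_singleton c x y (c x) j
      (by ext m; constructor
          · rintro ⟨k1, k2, k3⟩
            exact (k3 (c x) le_rfl (hA y x hyx) k1).symm
          · rintro rfl
            exact ⟨le_rfl, hA y x hyx, fun z hz1 _ hz3 => le_antisymm hz1 hz3⟩) hj
end

section
/- Let (P, ≤, ', 0, 1) be a sharply paraorthomodular mlb-complete poset with x → y := { y ∨ m | m ∈ Max L(x', y') }. Then for every b ∈ P, b' → b = {b}. -/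
theorem stmt_4 {P : Type*} [PartialOrder P] [BoundedOrder P] (c : P → P)
    (hA : ∀ x y : P, x ≤ y → c y ≤ c x) (hI : ∀ x : P, c (c x) = x)
    (hOrth : ∀ x y : P, x ≤ c y → ∃ s, IsLUB {x, y} s)
    (hP : ∀ x y : P, x ≤ y → IsGLB {c x, y} ⊥ → x = y)
    (hMlb : ∀ (M : Finset P) (x : P), (∀ m ∈ M, x ≤ m) →
      ∃ z, x ≤ z ∧ (∀ m ∈ M, z ≤ m) ∧ ∀ w, (∀ m ∈ M, w ≤ m) → z ≤ w → w = z) :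
    ∀ b : P, parrow c (c b) b = {b} := by
  classical
  intro b
  have hlubb : ∀ m : P, m ≤ b → IsLUB ({b, m} : Set P) b := by
    intro m hmb
    constructor
    · rintro x (rfl | rfl)
      · exact le_rfl
      · exact hmb
    · intro x hx
      exact hx (by simp)
  ext w
  simp only [parrow, MaxL, Set.mem_setOf_eq, Set.mem_singleton_iff, hI]
  constructor
  · rintro ⟨m, ⟨hmb, _, _⟩, hlub⟩
    exact hlub.unique (hlubb m hmb)
  · intro hw
    subst hw
    obtain ⟨z, -, hzle, hzmax⟩ :=
      hMlb ({w, c w} : Finset P) ⊥ (fun m _ => bot_le)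
    have hz1 : z ≤ w := hzle w (by simp)
    have hz2 : z ≤ c w := hzle (c w) (by simp)
    refine ⟨z, ⟨hz1, hz2, ?_⟩, hlubb z hz1⟩
    intro y hy1 hy2 hzy
    refine hzmax y ?_ hzy
    intro m hm
    rcases Finset.mem_insert.mp hm with rfl | hm
    · exact hy1
    · rw [Finset.mem_singleton.mp hm]; exact hy2
end

section
/- Let (P, ≤, ', 0, 1) be a sharply paraorthomodular mlb-complete poset with x → y := { y ∨ m | m ∈ Max L(x', y') }. Suppose a ≤ b' and b ∧ b' = 0. Then a → b = {b} if and only if a = b'. -/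
theorem stmt_5 {P : Type*} [PartialOrder P] [BoundedOrder P] (c : P → P)
    (hA : ∀ x y : P, x ≤ y → c y ≤ c x) (hI : ∀ x : P, c (c x) = x)
    (hOrth : ∀ x y : P, x ≤ c y → ∃ s, IsLUB {x, y} s)
    (hP : ∀ x y : P, x ≤ y → IsGLB {c x, y} ⊥ → x = y)
    (hMlb : ∀ (M : Finset P) (x : P), (∀ m ∈ M, x ≤ m) →
      ∃ z, x ≤ z ∧ (∀ m ∈ M, z ≤ m) ∧ ∀ w, (∀ m ∈ M, w ≤ m) → z ≤ w → w = z)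
    (a b : P) (hab : a ≤ c b) (hbb : IsGLB {b, c b} (⊥ : P)) :
    parrow c a b = {b} ↔ a = c b := by
  classical
  constructor
  · intro hpar
    -- show IsGLB {c a, c b} ⊥ then apply hP
    apply hP a (c b) hab
    constructor
    · intro x hx
      exact bot_le
    · intro m hm
      have hma : m ≤ c a := hm (Set.mem_insert _ _)
      have hmb : m ≤ c b := hm (Set.mem_insert_of_mem _ rfl)
      obtain ⟨z, hmz, hzlb, hzmax⟩ := hMlb {c a, c b} m (by
        intro x hx
        rcases Finset.mem_insert.mp hx with h | h
        · exact h ▸ hma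
        · exact (Finset.mem_singleton.mp h) ▸ hmb)
      have hza : z ≤ c a := hzlb _ (Finset.mem_insert_self _ _)
      have hzb : z ≤ c b := hzlb _ (Finset.mem_insert_of_mem (Finset.mem_singleton_self _))
      obtain ⟨s, hs⟩ := hOrth z b hzb
      have hsmem : s ∈ parrow c a b := by
        refine ⟨z, ⟨hza, hzb, ?_⟩, ?_⟩
        · intro w hwa hwb hzw
          exact hzmax w (by
            intro x hx
            rcases Finset.mem_insert.mp hx with h | h
            · exact h ▸ hwa
            · exact (Finset.mem_singleton.mp h) ▸ hwb) hzw
        · rwa [Set.pair_comm b z]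
      have hsb : s = b := by
        have := hpar ▸ hsmem
        exact this
      have hzleb : z ≤ b := by
        have := hs.1 (Set.mem_insert _ _)
        rwa [hsb] at this
      have : z ≤ ⊥ := hbb.2 (by
        intro x hx
        rcases hx with h | h
        · exact h ▸ hzleb
        · exact (Set.mem_singleton_iff.mp h) ▸ hzb)
      exact le_trans hmz this
  · intro heq
    have hca : c a = b := by rw [heq, hI]
    ext w
    simp only [Set.mem_singleton_iff]
    constructor
    · rintro ⟨m, ⟨hma, hmb, hmax⟩, hlub⟩
      rw [hca] at hma
      -- m is a lower bound of {b, c b}, so m ≤ ⊥, so m = ⊥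
      have hmbot : m ≤ ⊥ := hbb.2 (by
        intro x hx
        rcases hx with h | h
        · exact h ▸ hma
        · exact (Set.mem_singleton_iff.mp h) ▸ hmb)
      have hm0 : m = ⊥ := le_bot_iff.mp hmbot
      subst hm0
      have : IsLUB {b, (⊥ : P)} b := by
        constructor
        · intro x hx
          rcases hx with h | h
          · exact h ▸ le_refl b
          · exact (Set.mem_singleton_iff.mp h) ▸ bot_le
        · intro u hu
          exact hu (Set.mem_insert _ _)
      exact hlub.unique this
    · rintro rfl
      refine ⟨⊥, ⟨?_, bot_le, ?_⟩, ?_⟩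
      · rw [hca]; exact bot_le
      · intro z hza hzb _
        rw [hca] at hza
        exact le_bot_iff.mp (hbb.2 (by
          intro x hx
          rcases hx with h | h
          · exact h ▸ hza
          · exact (Set.mem_singleton_iff.mp h) ▸ hzb))
      · constructor
        · intro x hx
          rcases hx with h | h
          · exact h ▸ le_refl w
          · exact (Set.mem_singleton_iff.mp h) ▸ bot_le
        · intro u hu
          exact hu (Set.mem_insert _ _)
end

section
/- Let (P, ≤, ', 0, 1) be a sharply paraorthomodular mlb-complete poset with x → y := { y ∨ m | m ∈ Max L(x', y') }. Then a → b = {1} implies a ≤ b. -/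
theorem stmt_6 {P : Type*} [PartialOrder P] [BoundedOrder P] (c : P → P)
    (hA : ∀ x y : P, x ≤ y → c y ≤ c x) (hI : ∀ x : P, c (c x) = x)
    (hOrth : ∀ x y : P, x ≤ c y → ∃ s, IsLUB {x, y} s)
    (hP : ∀ x y : P, x ≤ y → IsGLB {c x, y} ⊥ → x = y)
    (hMlb : ∀ (M : Finset P) (x : P), (∀ m ∈ M, x ≤ m) →
      ∃ z, x ≤ z ∧ (∀ m ∈ M, z ≤ m) ∧ ∀ w, (∀ m ∈ M, w ≤ m) → z ≤ w → w = z)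
    (a b : P) (h : parrow c a b = {⊤}) : a ≤ b := by
  -- c ⊤ = ⊥
  have hctop : c ⊤ = ⊥ := by
    have := hA (c ⊥) ⊤ le_top
    rw [hI] at this
    exact le_antisymm this bot_le
  classical
  -- maximal lower bound of {c a, c b}
  obtain ⟨m, -, hlb, hmax⟩ := hMlb {c a, c b} ⊥ (fun _ _ => bot_le)
  have hma : m ≤ c a := hlb _ (by simp)
  have hmb : m ≤ c b := hlb _ (by simp)
  have hmem : m ∈ MaxL (c a) (c b) := by
    refine ⟨hma, hmb, fun z hza hzb hmz => ?_⟩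
    exact hmax z (by simp [hza, hzb]) hmz
  -- sup of {b, m} exists
  obtain ⟨s, hs⟩ := hOrth m b hmb
  rw [Set.pair_comm m b] at hs
  have hstop : s = ⊤ := by
    have : s ∈ parrow c a b := ⟨m, hmem, hs⟩
    rw [h] at this
    exact this
  subst hstop
  -- c m ∧ c b = ⊥
  have hglb : IsGLB {c m, c b} (⊥ : P) := by
    constructor
    · intro z _; exact bot_le
    · intro z hz
      have h1 : z ≤ c m := hz (by simp)
      have h2 : z ≤ c b := hz (by simp)
      have hm : m ≤ c z := by have := hA z (c m) h1; rwa [hI] at this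
      have hb : b ≤ c z := by have := hA z (c b) h2; rwa [hI] at this
      have : (⊤ : P) ≤ c z := hs.2 (by rintro x (rfl | rfl) <;> assumption)
      have hcz : c z = ⊤ := le_antisymm le_top this
      have : z = ⊥ := by rw [← hI z, hcz, hctop]
      exact this.le
  have hmcb : m = c b := hP m (c b) hmb hglb
  have : a ≤ c m := by have := hA m (c a) hma; rwa [hI] at this
  rwa [hmcb, hI] at this
end

section
/- Let (P, ≤, ', 0, 1) be an orthogonal mlb-complete poset with x → y := { y ∨ m | m ∈ Max L(x', y') }. Then P is paraorthomodular if and only if for all x, y: x → y = {1} implies x ≤ y. -/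
theorem stmt_7 {P : Type*} [PartialOrder P] [BoundedOrder P] (c : P → P)
    (hA : ∀ x y : P, x ≤ y → c y ≤ c x) (hI : ∀ x : P, c (c x) = x)
    (hOrth : ∀ x y : P, x ≤ c y → ∃ s, IsLUB {x, y} s)
    (hMlb : ∀ (M : Finset P) (x : P), (∀ m ∈ M, x ≤ m) →
      ∃ z, x ≤ z ∧ (∀ m ∈ M, z ≤ m) ∧ ∀ w, (∀ m ∈ M, w ≤ m) → z ≤ w → w = z) :
    (∀ x y : P, x ≤ y → IsGLB {c x, y} ⊥ → x = y) ↔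
      (∀ x y : P, parrow c x y = {⊤} → x ≤ y) := by
  have hrev : ∀ a b : P, c a ≤ c b → b ≤ a := by
    intro a b h
    have := hA _ _ h
    rwa [hI, hI] at this
  have hle : ∀ a b : P, a ≤ c b → b ≤ c a := by
    intro a b h
    have := hA _ _ h
    rwa [hI] at this
  have hcbot : c ⊥ = ⊤ := by
    apply top_le_iff.mp
    rw [← hI ⊤]
    exact hA _ _ bot_le
  have hctop : c ⊤ = ⊥ := by rw [← hcbot, hI]
  constructor
  · intro hpom x y hxy
    classical
    obtain ⟨m, -, hm2, hm3⟩ := hMlb {c x, c y} ⊥ (fun _ _ => bot_le)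
    have hmx : m ≤ c x := hm2 _ (by simp)
    have hmy : m ≤ c y := hm2 _ (by simp)
    have hmem : m ∈ MaxL (c x) (c y) := by
      refine ⟨hmx, hmy, fun z h1 h2 h3 => hm3 z ?_ h3⟩
      intro u hu
      rcases Finset.mem_insert.mp hu with h | h
      · rwa [h]
      · rw [Finset.mem_singleton.mp h]; exact h2
    obtain ⟨s, hs⟩ := hOrth y m (hle _ _ hmy)
    have hsmem : s ∈ parrow c x y := ⟨m, hmem, hs⟩
    rw [hxy] at hsmem
    have hstop : IsLUB {y, m} (⊤ : P) := by rwa [hsmem] at hs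
    have hglb : IsGLB {c m, c y} (⊥ : P) := by
      constructor
      · intro z _; exact bot_le
      · intro z hz
        have hz1 : z ≤ c m := hz (by simp)
        have hz2 : z ≤ c y := hz (by simp)
        have h1 : m ≤ c z := hle _ _ hz1
        have h2 : y ≤ c z := hrev _ _ (by rwa [hI])
        have : (⊤ : P) ≤ c z := hstop.2 (by
          intro u hu
          rcases hu with h | h
          · rwa [h]
          · rw [Set.mem_singleton_iff.mp h]; exact h1)
        have : c z = ⊤ := top_le_iff.mp this
        have hz0 : z = ⊥ := by
          calc z = c (c z) := (hI z).symm
          _ = c ⊤ := by rw [this]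
          _ = ⊥ := hctop
        exact hz0.le
    have := hpom m (c y) hmy hglb
    rw [this] at hmx
    exact hrev _ _ hmx
  · intro h x y hxy hglb
    have hub : ∀ w : P, x ≤ w → c y ≤ w → w = ⊤ := by
      intro w h1 h2
      have ha : c w ≤ c x := hA _ _ h1
      have hb : c w ≤ y := by have := hA _ _ h2; rwa [hI] at this
      have : c w ≤ ⊥ := hglb.2 (by
        intro u hu
        rcases hu with hh | hh
        · rwa [hh]
        · rw [Set.mem_singleton_iff.mp hh]; exact hb)
      have hcw : c w = ⊥ := le_bot_iff.mp this
      calc w = c (c w) := (hI w).symm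
      _ = c ⊥ := by rw [hcw]
      _ = ⊤ := hcbot
    have key : parrow c y x = {⊤} := by
      ext w
      simp only [Set.mem_singleton_iff]
      constructor
      · rintro ⟨m, ⟨hm1, hm2, hm3⟩, hlub⟩
        have hmeq : m = c y := (hm3 (c y) le_rfl (hA _ _ hxy) hm1).symm
        have hxw : x ≤ w := hlub.1 (by simp)
        have hmw : c y ≤ w := by rw [← hmeq]; exact hlub.1 (by simp)
        exact hub w hxw hmw
      · rintro rfl
        refine ⟨c y, ⟨le_rfl, hA _ _ hxy, fun z h1 _ h2 => le_antisymm h1 h2⟩, ?_, ?_⟩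
        · intro u _; exact le_top
        · intro u hu
          have h1 : x ≤ u := hu (by simp)
          have h2 : c y ≤ u := hu (by simp)
          rw [hub u h1 h2]
    have := h y x key
    exact le_antisymm hxy this
end

section
/- In any Kleene lattice, x ∧ y = 0 implies x ≤ y'. -/
/-- In any Kleene lattice (bounded distributive lattice with antitone involution,
paraorthomodular and regular), `x ∧ y = 0` implies `x ≤ y'`. -/
theorem stmt_9 {L : Type*} [DistribLattice L] [BoundedOrder L] (c : L → L)
    (hA : ∀ x y : L, x ≤ y → c y ≤ c x) (hI : ∀ x : L, c (c x) = x)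
    (hP : ∀ x y : L, x ≤ y → c x ⊓ y = ⊥ → x = y)
    (hReg : ∀ x y : L, x ⊓ c x ≤ y ⊔ c y)
    (x y : L) (h : x ⊓ y = ⊥) : x ≤ c y := by
  -- De Morgan law from antitone involution
  have hdm : ∀ a b : L, c (a ⊓ b) = c a ⊔ c b := by
    intro a b
    apply le_antisymm
    · have h1 : c (c a ⊔ c b) ≤ a ⊓ b :=
        le_inf (by simpa [hI] using hA (c a) (c a ⊔ c b) le_sup_left)
               (by simpa [hI] using hA (c b) (c a ⊔ c b) le_sup_right)
      calc c (a ⊓ b) ≤ c (c (c a ⊔ c b)) := hA _ _ h1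
        _ = c a ⊔ c b := hI _
    · exact sup_le (hA _ _ inf_le_left) (hA _ _ inf_le_right)
  -- y ⊓ c y ≤ c x
  have h1 : y ⊓ c y ≤ c x := by
    have hr := hReg y x
    have : y ⊓ c y = (y ⊓ c y ⊓ x) ⊔ (y ⊓ c y ⊓ c x) := by
      rw [← inf_sup_left, inf_eq_left.mpr hr]
    rw [this]
    apply sup_le
    · have : y ⊓ c y ⊓ x ≤ x ⊓ y :=
        le_inf (inf_le_right) (le_trans inf_le_left inf_le_left)
      exact le_trans (le_trans this h.le) bot_le
    · exact inf_le_right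
  -- hence x ≤ y ⊔ c y
  have h2 : x ≤ y ⊔ c y := by
    have h2' := hA _ _ h1
    rw [hdm, hI, hI] at h2'
    exact h2'.trans (sup_comm _ _).le
  -- distribute
  have h3 : x = (x ⊓ y) ⊔ (x ⊓ c y) := by
    rw [← inf_sup_left, inf_eq_left.mpr h2]
  rw [h3, h]
  simp
end

section
/- An atomic amalgam of a pasted family of Kleene lattices is a paraorthomodular poset. -/
/-- A pasted family of finite Kleene lattices over a common carrier `K`,
indexed by `ι`.  Each block `blk i` carries a bounded distributive lattice
structure `(le i, inf i, sup i, bot, top)` with an antitone involution `compl`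
which is paraorthomodular and regular (i.e. each block is a Kleene lattice)
and has at least 6 elements.  Any two distinct blocks intersect either in
`{bot, top}` or in a common atomic Kleene subalgebra of at most 4 elements on
which the operations coincide and whose elements other than `bot`, `top` are
simultaneously atoms or simultaneously coatoms of both blocks. -/
structure PastedFamily (K : Type*) (ι : Type*) where
  blk : ι → Set K
  cover : ∀ x : K, ∃ i, x ∈ blk i
  le : ι → K → K → Prop
  inf : ι → K → K → K
  sup : ι → K → K → K
  compl : K → K
  bot : K
  top : K
  bot_mem : ∀ i, bot ∈ blk i
  top_mem : ∀ i, top ∈ blk i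
  finite : ∀ i, (blk i).Finite
  card6 : ∀ i, 6 ≤ (blk i).ncard
  le_refl : ∀ i x, x ∈ blk i → le i x x
  le_antisymm' : ∀ i x y, le i x y → le i y x → x = y
  le_trans' : ∀ i x y z, le i x y → le i y z → le i x z
  bot_le : ∀ i x, x ∈ blk i → le i bot x
  le_top : ∀ i x, x ∈ blk i → le i x top
  inf_mem : ∀ i x y, x ∈ blk i → y ∈ blk i → inf i x y ∈ blk i
  sup_mem : ∀ i x y, x ∈ blk i → y ∈ blk i → sup i x y ∈ blk i
  inf_le_left : ∀ i x y, x ∈ blk i → y ∈ blk i → le i (inf i x y) x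
  inf_le_right : ∀ i x y, x ∈ blk i → y ∈ blk i → le i (inf i x y) y
  le_inf : ∀ i x y z, x ∈ blk i → y ∈ blk i → z ∈ blk i →
    le i z x → le i z y → le i z (inf i x y)
  le_sup_left : ∀ i x y, x ∈ blk i → y ∈ blk i → le i x (sup i x y)
  le_sup_right : ∀ i x y, x ∈ blk i → y ∈ blk i → le i y (sup i x y)
  sup_le : ∀ i x y z, x ∈ blk i → y ∈ blk i → z ∈ blk i →
    le i x z → le i y z → le i (sup i x y) z
  distrib : ∀ i x y z, x ∈ blk i → y ∈ blk i → z ∈ blk i →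
    inf i x (sup i y z) = sup i (inf i x y) (inf i x z)
  compl_mem : ∀ i x, x ∈ blk i → compl x ∈ blk i
  compl_antitone : ∀ i x y, x ∈ blk i → y ∈ blk i → le i x y →
    le i (compl y) (compl x)
  compl_invol : ∀ x, compl (compl x) = x
  /-- Each block is paraorthomodular. -/
  blockParaOM : ∀ i x y, x ∈ blk i → y ∈ blk i → le i x y →
    inf i (compl x) y = bot → x = y
  /-- Each block is regular (Kleene condition). -/
  regular : ∀ i x y, x ∈ blk i → y ∈ blk i →
    le i (inf i x (compl x)) (sup i y (compl y))
  /-- The block orders agree on intersections of blocks. -/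
  le_compat : ∀ i j x y, x ∈ blk i → y ∈ blk i → x ∈ blk j → y ∈ blk j →
    le i x y → le j x y
  /-- Pasting condition on the intersection of two distinct blocks. -/
  inter : ∀ i j, i ≠ j → blk i ∩ blk j = {bot, top} ∨
    ((blk i ∩ blk j).ncard ≤ 4 ∧
     bot ∈ blk i ∩ blk j ∧ top ∈ blk i ∩ blk j ∧
     (∀ x ∈ blk i ∩ blk j, compl x ∈ blk i ∩ blk j) ∧
     (∀ x y, x ∈ blk i ∩ blk j → y ∈ blk i ∩ blk j →
       inf i x y = inf j x y ∧ inf i x y ∈ blk i ∩ blk j ∧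
       sup i x y = sup j x y ∧ sup i x y ∈ blk i ∩ blk j) ∧
     (∀ x ∈ blk i ∩ blk j, x ≠ bot → x ≠ top →
       ((x ≠ bot ∧ ∀ z ∈ blk i, le i z x → z = bot ∨ z = x) ∧
        (x ≠ bot ∧ ∀ z ∈ blk j, le j z x → z = bot ∨ z = x)) ∨
       ((x ≠ top ∧ ∀ z ∈ blk i, le i x z → z = top ∨ z = x) ∧
        (x ≠ top ∧ ∀ z ∈ blk j, le j x z → z = top ∨ z = x))))

namespace PastedFamily

variable {K ι : Type*} (A : PastedFamily K ι)

/-- The order of the atomic amalgam: `x ≤ y` iff `x ≤ y` in some block. -/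
def gle (x y : K) : Prop := ∃ i, x ∈ A.blk i ∧ y ∈ A.blk i ∧ A.le i x y

/-- `s` is the least upper bound of `x` and `y` in the amalgam. -/
def IsLubA (x y s : K) : Prop :=
  A.gle x s ∧ A.gle y s ∧ ∀ z, A.gle x z → A.gle y z → A.gle s z

/-- `m` is the greatest lower bound of `x` and `y` in the amalgam. -/
def IsGlbA (x y m : K) : Prop :=
  A.gle m x ∧ A.gle m y ∧ ∀ z, A.gle z x → A.gle z y → A.gle z m

/-- Paraorthomodularity of the amalgam: `x ≤ y` and `x' ∧ y = 0`
(i.e. the lower cone `L(x', y)` is `{0}`) imply `x = y`. -/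
def ParaOM : Prop := ∀ x y, A.gle x y →
  (∀ z, A.gle z (A.compl x) → A.gle z y → z = A.bot) → x = y

/-- Blocks `i, j, k` form an atomic loop of order 3: consecutive (cyclic)
intersections have exactly 4 elements and the triple intersection is `{0,1}`. -/
def AtomicLoop3 (i j k : ι) : Prop :=
  (A.blk i ∩ A.blk j).ncard = 4 ∧ (A.blk j ∩ A.blk k).ncard = 4 ∧
  (A.blk k ∩ A.blk i).ncard = 4 ∧
  A.blk i ∩ A.blk j ∩ A.blk k = {A.bot, A.top}

/-- Blocks `i, j, k, l` form an atomic loop of order 4. -/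
def AtomicLoop4 (i j k l : ι) : Prop :=
  (A.blk i ∩ A.blk j).ncard = 4 ∧ (A.blk j ∩ A.blk k).ncard = 4 ∧
  (A.blk k ∩ A.blk l).ncard = 4 ∧ (A.blk l ∩ A.blk i).ncard = 4 ∧
  A.blk i ∩ A.blk k = {A.bot, A.top} ∧ A.blk j ∩ A.blk l = {A.bot, A.top} ∧
  A.blk i ∩ A.blk j ∩ A.blk k = {A.bot, A.top} ∧
  A.blk i ∩ A.blk j ∩ A.blk l = {A.bot, A.top} ∧
  A.blk i ∩ A.blk k ∩ A.blk l = {A.bot, A.top} ∧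
  A.blk j ∩ A.blk k ∩ A.blk l = {A.bot, A.top}

end PastedFamily

/-- The atomic amalgam of a pasted family of Kleene lattices is a
paraorthomodular poset: the glued relation is a bounded partial order, the
inherited complementation is an antitone involution for it, and the
paraorthomodular law (P) holds. -/
theorem stmt_10 {K ι : Type*} (A : PastedFamily K ι) :
    (∀ x, A.gle x x) ∧
    (∀ x y, A.gle x y → A.gle y x → x = y) ∧
    (∀ x y z, A.gle x y → A.gle y z → A.gle x z) ∧
    (∀ x, A.gle A.bot x) ∧ (∀ x, A.gle x A.top) ∧
    (∀ x y, A.gle x y → A.gle (A.compl y) (A.compl x)) ∧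
    (∀ x, A.compl (A.compl x) = x) ∧
    A.ParaOM := by
  refine ⟨?_, ?_, ?_, ?_, ?_, ?_, A.compl_invol, ?_⟩
  · intro x
    obtain ⟨i, hi⟩ := A.cover x
    exact ⟨i, hi, hi, A.le_refl i x hi⟩
  · rintro x y ⟨i, hxi, hyi, hxy⟩ ⟨j, hyj, hxj, hyx⟩
    exact A.le_antisymm' i x y hxy (A.le_compat j i y x hyj hxj hyi hxi hyx)
  · rintro x y z ⟨i, hxi, hyi, hxy⟩ ⟨j, hyj, hzj, hyz⟩
    by_cases hij : i = j
    · subst hij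
      exact ⟨i, hxi, hzj, A.le_trans' i x y z hxy hyz⟩
    by_cases hyb : y = A.bot
    · subst hyb
      have hx : x = A.bot := A.le_antisymm' i x A.bot hxy (A.bot_le i x hxi)
      subst hx
      exact ⟨j, A.bot_mem j, hzj, A.bot_le j z hzj⟩
    by_cases hyt : y = A.top
    · subst hyt
      have hz : z = A.top := (A.le_antisymm' j A.top z hyz (A.le_top j z hzj)).symm
      subst hz
      exact ⟨i, hxi, A.top_mem i, hxy⟩
    have hmem : y ∈ A.blk i ∩ A.blk j := ⟨hyi, hyj⟩
    rcases A.inter i j hij with h | ⟨-, -, -, -, -, h⟩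
    · rw [h] at hmem
      rcases hmem with h' | h' <;> [exact absurd h' hyb; exact absurd h' hyt]
    · rcases h y hmem hyb hyt with ⟨⟨-, hatom⟩, -⟩ | ⟨-, ⟨-, hcoat⟩⟩
      · rcases hatom x hxi hxy with hx | hx
        · subst hx
          exact ⟨j, A.bot_mem j, hzj, A.bot_le j z hzj⟩
        · subst hx
          exact ⟨j, hyj, hzj, hyz⟩
      · rcases hcoat z hzj hyz with hz | hz
        · subst hz
          exact ⟨i, hxi, A.top_mem i, A.le_top i x hxi⟩
        · subst hz
          exact ⟨i, hxi, hyi, hxy⟩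
  · intro x
    obtain ⟨i, hi⟩ := A.cover x
    exact ⟨i, A.bot_mem i, hi, A.bot_le i x hi⟩
  · intro x
    obtain ⟨i, hi⟩ := A.cover x
    exact ⟨i, hi, A.top_mem i, A.le_top i x hi⟩
  · rintro x y ⟨i, hxi, hyi, hxy⟩
    exact ⟨i, A.compl_mem i y hyi, A.compl_mem i x hxi,
      A.compl_antitone i x y hxi hyi hxy⟩
  · rintro x y ⟨i, hxi, hyi, hxy⟩ hcone
    have hc : A.compl x ∈ A.blk i := A.compl_mem i x hxi
    set m := A.inf i (A.compl x) y with hm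
    have hmi : m ∈ A.blk i := A.inf_mem i _ _ hc hyi
    have h1 : A.gle m (A.compl x) := ⟨i, hmi, hc, A.inf_le_left i _ _ hc hyi⟩
    have h2 : A.gle m y := ⟨i, hmi, hyi, A.inf_le_right i _ _ hc hyi⟩
    exact A.blockParaOM i x y hxi hyi hxy (hcone m h1 h2)
end

section
/- Let K be an atomic amalgam of a pasted family of Kleene lattices {K_i}, and let x, y ∈ K with x ≤ y in the block K_i and y ≠ x'. Then x is covered by y in K if and only if x is covered by y in K_i. -/
namespace PastedFamily

variable {K ι : Type*} (A : PastedFamily K ι)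

lemma inf_comm' (i : ι) {a b : K} (ha : a ∈ A.blk i) (hb : b ∈ A.blk i) :
    A.inf i a b = A.inf i b a :=
  A.le_antisymm' i _ _
    (A.le_inf i b a _ hb ha (A.inf_mem i a b ha hb)
      (A.inf_le_right i a b ha hb) (A.inf_le_left i a b ha hb))
    (A.le_inf i a b _ ha hb (A.inf_mem i b a hb ha)
      (A.inf_le_right i b a hb ha) (A.inf_le_left i b a hb ha))

lemma sup_bot' (i : ι) {a : K} (ha : a ∈ A.blk i) : A.sup i A.bot a = a :=
  A.le_antisymm' i _ _
    (A.sup_le i A.bot a a (A.bot_mem i) ha ha (A.bot_le i a ha) (A.le_refl i a ha))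
    (A.le_sup_right i A.bot a (A.bot_mem i) ha)

lemma inf_self (i : ι) {a : K} (ha : a ∈ A.blk i) : A.inf i a a = a :=
  A.le_antisymm' i _ _ (A.inf_le_left i a a ha ha)
    (A.le_inf i a a a ha ha ha (A.le_refl i a ha) (A.le_refl i a ha))

lemma sup_self (i : ι) {a : K} (ha : a ∈ A.blk i) : A.sup i a a = a :=
  A.le_antisymm' i _ _
    (A.sup_le i a a a ha ha ha (A.le_refl i a ha) (A.le_refl i a ha))
    (A.le_sup_left i a a ha ha)

lemma compl_bot (i : ι) : A.compl A.bot = A.top := by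
  have hct : A.compl A.top ∈ A.blk i := A.compl_mem i _ (A.top_mem i)
  have h1 : A.le i A.bot (A.compl A.top) := A.bot_le i _ hct
  have h2 := A.compl_antitone i A.bot (A.compl A.top) (A.bot_mem i) hct h1
  rw [A.compl_invol] at h2
  exact A.le_antisymm' i _ _ (A.le_top i _ (A.compl_mem i _ (A.bot_mem i))) h2

lemma compl_top (i : ι) : A.compl A.top = A.bot := by
  rw [← A.compl_bot i, A.compl_invol]

lemma bot_ne_top (i : ι) : A.bot ≠ A.top := by
  intro h
  have hsub : A.blk i ⊆ ({A.bot} : Set K) := by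
    intro w hw
    have h2 := A.le_top i w hw
    rw [← h] at h2
    have : w = A.bot := A.le_antisymm' i w A.bot h2 (A.bot_le i w hw)
    simp [this]
  have hle := Set.ncard_le_ncard hsub (Set.finite_singleton _)
  have h6 := A.card6 i
  rw [Set.ncard_singleton] at hle
  omega

/-- A block containing an element that is simultaneously an "atom" and a
"coatom" (in the covering sense) has at most 4 elements: contradiction. -/
lemma small (i : ι) (a : K) (ha : a ∈ A.blk i)
    (hdown : ∀ w ∈ A.blk i, A.le i w a → w = A.bot ∨ w = a)
    (hup : ∀ w ∈ A.blk i, A.le i a w → w = A.top ∨ w = a) : False := by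
  have classify : ∀ w ∈ A.blk i, w = A.bot ∨ w = a ∨ w = A.top ∨
      (A.inf i a w = A.bot ∧ A.sup i a w = A.top) := by
    intro w hw
    rcases hdown (A.inf i a w) (A.inf_mem i a w ha hw) (A.inf_le_left i a w ha hw) with h1 | h1
    · rcases hup (A.sup i a w) (A.sup_mem i a w ha hw) (A.le_sup_left i a w ha hw) with h2 | h2
      · exact Or.inr (Or.inr (Or.inr ⟨h1, h2⟩))
      · have hle : A.le i w a := h2 ▸ A.le_sup_right i a w ha hw
        rcases hdown w hw hle with h | h
        · exact Or.inl h
        · exact Or.inr (Or.inl h)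
    · have hle : A.le i a w := h1 ▸ A.inf_le_right i a w ha hw
      rcases hup w hw hle with h | h
      · exact Or.inr (Or.inr (Or.inl h))
      · exact Or.inr (Or.inl h)
  have key : ∀ c d, c ∈ A.blk i → d ∈ A.blk i → A.inf i a c = A.bot →
      A.sup i a d = A.top → A.le i c d := by
    intro c d hc hd hic hsd
    have e1 : A.le i c (A.inf i c (A.sup i a d)) :=
      A.le_inf i c (A.sup i a d) c hc (A.sup_mem i a d ha hd) hc
        (A.le_refl i c hc) (hsd ▸ A.le_top i c hc)
    have e2 : A.inf i c (A.sup i a d) = A.sup i (A.inf i c a) (A.inf i c d) :=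
      A.distrib i c a d hc ha hd
    have e3 : A.inf i c a = A.bot := (A.inf_comm' i hc ha).trans hic
    have e4 : A.sup i A.bot (A.inf i c d) = A.inf i c d :=
      A.sup_bot' i (A.inf_mem i c d hc hd)
    rw [e2, e3, e4] at e1
    exact A.le_trans' i c _ d e1 (A.inf_le_right i c d hc hd)
  have huniq : ∀ c₁ c₂, c₁ ∈ A.blk i → c₂ ∈ A.blk i →
      A.inf i a c₁ = A.bot → A.sup i a c₁ = A.top →
      A.inf i a c₂ = A.bot → A.sup i a c₂ = A.top → c₁ = c₂ := by
    intro c₁ c₂ h1 h2 hi1 hs1 hi2 hs2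
    exact A.le_antisymm' i c₁ c₂ (key c₁ c₂ h1 h2 hi1 hs2) (key c₂ c₁ h2 h1 hi2 hs1)
  have h6 := A.card6 i
  by_cases hex : ∃ c ∈ A.blk i, A.inf i a c = A.bot ∧ A.sup i a c = A.top
  · obtain ⟨c, hcmem, hic, hsc⟩ := hex
    have hsub : A.blk i ⊆ ({A.bot, a, A.top, c} : Set K) := by
      intro w hw
      rcases classify w hw with h | h | h | ⟨h1, h2⟩
      · simp [h]
      · simp [h]
      · simp [h]
      · simp [huniq w c hw hcmem h1 h2 hic hsc]
    have hle := Set.ncard_le_ncard hsub (Set.toFinite _)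
    have e1 := Set.ncard_insert_le A.bot ({a, A.top, c} : Set K)
    have e2 := Set.ncard_insert_le a ({A.top, c} : Set K)
    have e3 := Set.ncard_insert_le A.top ({c} : Set K)
    have e4 : ({c} : Set K).ncard = 1 := Set.ncard_singleton c
    omega
  · push_neg at hex
    have hsub : A.blk i ⊆ ({A.bot, a, A.top} : Set K) := by
      intro w hw
      rcases classify w hw with h | h | h | ⟨h1, h2⟩
      · simp [h]
      · simp [h]
      · simp [h]
      · exact absurd h2 (hex w hw h1)
    have hle := Set.ncard_le_ncard hsub (Set.toFinite _)
    have e1 := Set.ncard_insert_le A.bot ({a, A.top} : Set K)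
    have e2 := Set.ncard_insert_le a ({A.top} : Set K)
    have e3 : ({A.top} : Set K).ncard = 1 := Set.ncard_singleton _
    omega

end PastedFamily

/-- In an atomic amalgam of Kleene lattices: if `x ≤ y` inside a block `K_i`
and `y ≠ x'`, then `x` is covered by `y` in the amalgam iff `x` is covered by
`y` in `K_i`. -/
theorem stmt_11 {K ι : Type*} (A : PastedFamily K ι) (i : ι) (x y : K)
    (hx : x ∈ A.blk i) (hy : y ∈ A.blk i) (hxy : A.le i x y)
    (hne : y ≠ A.compl x) :
    (A.gle x y ∧ x ≠ y ∧ ∀ z, A.gle x z → A.gle z y → z = x ∨ z = y) ↔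
    (A.le i x y ∧ x ≠ y ∧
      ∀ z ∈ A.blk i, A.le i x z → A.le i z y → z = x ∨ z = y) := by
  constructor
  · rintro ⟨hg, hxyne, hcov⟩
    exact ⟨hxy, hxyne, fun z hz h1 h2 => hcov z ⟨i, hx, hz, h1⟩ ⟨i, hz, hy, h2⟩⟩
  · rintro ⟨-, hxyne, hcov⟩
    refine ⟨⟨i, hx, hy, hxy⟩, hxyne, ?_⟩
    rintro z ⟨j, hxj, hzj, hxzj⟩ ⟨k, hzk, hyk, hzyk⟩
    by_cases hzi : z ∈ A.blk i
    · exact hcov z hzi (A.le_compat j i x z hxj hzj hx hzi hxzj)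
        (A.le_compat k i z y hzk hyk hzi hy hzyk)
    have hbt := A.bot_ne_top i
    have hji : j ≠ i := fun h => hzi (h ▸ hzj)
    have hki : k ≠ i := fun h => hzi (h ▸ hzk)
    have hznb : z ≠ A.bot := fun h => hzi (h ▸ A.bot_mem i)
    have hznt : z ≠ A.top := fun h => hzi (h ▸ A.top_mem i)
    have hxnt : x ≠ A.top := by
      intro h
      have hyt : y = A.top := A.le_antisymm' i y A.top (A.le_top i y hy) (h ▸ hxy)
      exact hxyne (h.trans hyt.symm)
    have hynb : y ≠ A.bot := by
      intro h
      have hxb : x = A.bot := A.le_antisymm' i x A.bot (h ▸ hxy) (A.bot_le i x hx)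
      exact hxyne (hxb.trans h.symm)
    by_cases hxb : x = A.bot
    · -- x = ⊥ ; then y ≠ ⊤ by hne, and y is a nontrivial element of blk i ∩ blk k
      have hynt : y ≠ A.top := by
        intro h
        exact hne (by rw [h, hxb, A.compl_bot i])
      rcases A.inter i k (fun h => hki h.symm) with hIK | ⟨-, -, -, -, -, hac⟩
      · have hmem : y ∈ ({A.bot, A.top} : Set K) := hIK ▸ (⟨hy, hyk⟩ : y ∈ A.blk i ∩ A.blk k)
        rcases (by simpa using hmem : y = A.bot ∨ y = A.top) with h | h
        · exact absurd h hynb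
        · exact absurd h hynt
      rcases hac y ⟨hy, hyk⟩ hynb hynt with ⟨-, -, hatk⟩ | ⟨⟨-, hcoi⟩, -⟩
      · rcases hatk z hzk hzyk with h | h
        · exact absurd h hznb
        · exact Or.inr h
      · exact absurd (A.small i y hy
          (fun w hw hle => (hcov w hw (by rw [hxb]; exact A.bot_le i w hw) hle).imp
            (fun h => h.trans hxb) id) hcoi) (fun h => h)
    by_cases hyt : y = A.top
    · -- y = ⊤ ; then x is a nontrivial element of blk i ∩ blk j
      rcases A.inter i j (fun h => hji h.symm) with hIJ | ⟨-, -, -, -, -, hac⟩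
      · have hmem : x ∈ ({A.bot, A.top} : Set K) := hIJ ▸ (⟨hx, hxj⟩ : x ∈ A.blk i ∩ A.blk j)
        rcases (by simpa using hmem : x = A.bot ∨ x = A.top) with h | h
        · exact absurd h hxb
        · exact absurd h hxnt
      rcases hac x ⟨hx, hxj⟩ hxb hxnt with ⟨⟨-, hati⟩, -⟩ | ⟨-, -, hcoj⟩
      · exact absurd (A.small i x hx hati
          (fun w hw hle => (hcov w hw hle (by rw [hyt]; exact A.le_top i w hw)).elim
            (fun h => Or.inr h) (fun h => Or.inl (h.trans hyt)))) (fun h => h)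
      · rcases hcoj z hzj hxzj with h | h
        · exact absurd h hznt
        · exact Or.inl h
    -- now x and y are both nontrivial
    by_cases hjk : j = k
    · -- regularity argument: x, y ∈ blk i ∩ blk j would force x' = x, y' = y
      subst hjk
      exfalso
      rcases A.inter i j (fun h => hji h.symm) with hIJ | ⟨h4, -, -, hcmem, -, -⟩
      · have hmem : x ∈ ({A.bot, A.top} : Set K) := hIJ ▸ (⟨hx, hxj⟩ : x ∈ A.blk i ∩ A.blk j)
        rcases (by simpa using hmem : x = A.bot ∨ x = A.top) with h | h
        · exact hxb h
        · exact hxnt h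
      have hSsub : ({A.bot, A.top, x, y} : Set K) ⊆ A.blk i ∩ A.blk j := by
        intro w hw
        rcases (by simpa using hw : w = A.bot ∨ w = A.top ∨ w = x ∨ w = y) with h | h | h | h
        · exact h ▸ ⟨A.bot_mem i, A.bot_mem j⟩
        · exact h ▸ ⟨A.top_mem i, A.top_mem j⟩
        · exact h ▸ ⟨hx, hxj⟩
        · exact h ▸ ⟨hy, hyk⟩
      have m1 : A.bot ∉ ({A.top, x, y} : Set K) := by
        simp only [Set.mem_insert_iff, Set.mem_singleton_iff]
        push_neg
        exact ⟨hbt, Ne.symm hxb, Ne.symm hynb⟩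
      have m2 : A.top ∉ ({x, y} : Set K) := by
        simp only [Set.mem_insert_iff, Set.mem_singleton_iff]
        push_neg
        exact ⟨Ne.symm hxnt, Ne.symm hyt⟩
      have hS4 : ({A.bot, A.top, x, y} : Set K).ncard = 4 := by
        rw [Set.ncard_insert_of_notMem m1 (Set.toFinite _),
          Set.ncard_insert_of_notMem m2 (Set.toFinite _), Set.ncard_pair hxyne]
      have heq : ({A.bot, A.top, x, y} : Set K) = A.blk i ∩ A.blk j :=
        Set.eq_of_subset_of_ncard_le hSsub (by rw [hS4]; exact h4)
          ((A.finite i).subset Set.inter_subset_left)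
      have hcx : A.compl x = x := by
        have hmem : A.compl x ∈ ({A.bot, A.top, x, y} : Set K) := by
          rw [heq]; exact hcmem x ⟨hx, hxj⟩
        rcases (by simpa using hmem :
            A.compl x = A.bot ∨ A.compl x = A.top ∨ A.compl x = x ∨ A.compl x = y)
            with h | h | h | h
        · exact absurd (by rw [← A.compl_invol x, h, A.compl_bot i]) hxnt
        · exact absurd (by rw [← A.compl_invol x, h, A.compl_top i]) hxb
        · exact h
        · exact absurd h.symm hne
      have hcy : A.compl y = y := by
        have hmem : A.compl y ∈ ({A.bot, A.top, x, y} : Set K) := by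
          rw [heq]; exact hcmem y ⟨hy, hyk⟩
        rcases (by simpa using hmem :
            A.compl y = A.bot ∨ A.compl y = A.top ∨ A.compl y = x ∨ A.compl y = y)
            with h | h | h | h
        · exact absurd (by rw [← A.compl_invol y, h, A.compl_bot i]) hyt
        · exact absurd (by rw [← A.compl_invol y, h, A.compl_top i]) hynb
        · exact absurd (by rw [← A.compl_invol y, h] : y = A.compl x) hne
        · exact h
      have hreg := A.regular i y x hy hx
      rw [hcy, hcx, A.inf_self i hy, A.sup_self i hx] at hreg
      exact hxyne (A.le_antisymm' i x y hxy hreg)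
    · -- j ≠ k : z is a nontrivial element of blk j ∩ blk k
      rcases A.inter j k hjk with hJK | ⟨-, -, -, -, -, hac⟩
      · have hmem : z ∈ ({A.bot, A.top} : Set K) := hJK ▸ (⟨hzj, hzk⟩ : z ∈ A.blk j ∩ A.blk k)
        rcases (by simpa using hmem : z = A.bot ∨ z = A.top) with h | h
        · exact absurd h hznb
        · exact absurd h hznt
      rcases hac z ⟨hzj, hzk⟩ hznb hznt with ⟨⟨-, hatj⟩, -⟩ | ⟨-, -, hcok⟩
      · rcases hatj x hxj hxzj with h | h
        · exact absurd h hxb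
        · exact Or.inl h.symm
      · rcases hcok y hyk hzyk with h | h
        · exact absurd h hyt
        · exact Or.inr h.symm
end
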